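/- For a graph G with chromatic polynomial χ_G, the evaluation (−1)^{r(G)} χ̃_G(0) is a nonnegative integer equal to the number of spanning forests of G (with k(G) trees spanning the components) containing no broken circuit, where χ̃_G(t) = χ_G(t)/t^{k(G)} and r(G) = n − k(G). -/

import Mathlib

open Polynomial Finset

variable {ι : Type*} {V : Type*} [AddCommGroup V] [Module ℂ V]

/-- Independence in the linear matroid of a vector configuration `v`. -/
def LinIndep (v : ι → V) (S : Finset ι) : Prop :=
  LinearIndependent ℂ (fun x : S => v x)

/-- A circuit of the linear matroid of `v`: a minimal dependent set. -/
def LinCircuit (v : ι → V) (C : Finset ι) : Prop :=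
  ¬ LinIndep v C ∧ ∀ D : Finset ι, D ⊂ C → LinIndep v D

/-- A base of the linear matroid of `v`: a maximal independent set. -/
def LinBase (v : ι → V) (S : Finset ι) : Prop :=
  LinIndep v S ∧ ∀ T : Finset ι, S ⊆ T → LinIndep v T → T = S

/-- A broken circuit with respect to a linear order `lo` on the index set:
a circuit with its largest element removed. -/
def LinBrokenCircuit (v : ι → V) (lo : LinearOrder ι) (B : Finset ι) : Prop :=
  ∃ C : Finset ι, LinCircuit v C ∧ ∃ u ∈ C, (∀ w ∈ C, lo.le w u) ∧ B = C.erase u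

/-- `S` contains no broken circuit with respect to `lo`. -/
def LinNoBrokenCircuit (v : ι → V) (lo : LinearOrder ι) (S : Finset ι) : Prop :=
  ∀ B : Finset ι, LinBrokenCircuit v lo B → ¬ B ⊆ S


open Module Submodule

section Aux

lemma linIndep_sum_iff (v : ι → V) (S : Finset ι) :
    LinIndep v S ↔ ∀ g : ι → ℂ, ∑ i ∈ S, g i • v i = 0 → ∀ i ∈ S, g i = 0 := by
  classical
  rw [LinIndep, Fintype.linearIndependent_iff]
  constructor
  · intro h g hg i hi
    rw [← Finset.sum_coe_sort S (fun i => g i • v i)] at hg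
    exact h (fun x : S => g x) hg ⟨i, hi⟩
  · intro h g hg i
    have hg' : ∑ j ∈ S, (fun j => if hj : j ∈ S then g ⟨j, hj⟩ else 0) j • v j = 0 := by
      rw [← Finset.sum_coe_sort S]
      simpa using hg
    have := h _ hg' i i.2
    simpa [i.2] using this

lemma linIndep_mono {v : ι → V} {S T : Finset ι} (hT : LinIndep v T) (hST : S ⊆ T) :
    LinIndep v S := by
  classical
  rw [linIndep_sum_iff] at hT ⊢
  intro g hg i hi
  have h2 : ∑ j ∈ T, (if j ∈ S then g j else 0) • v j = 0 := by
    have : ∀ j, (if j ∈ S then g j else 0) • v j = if j ∈ S then g j • v j else 0 := by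
      intro j; split <;> simp
    simp_rw [this]
    rw [Finset.sum_ite_mem, Finset.inter_comm, Finset.inter_eq_left.2 hST]
    exact hg
  have := hT _ h2 i (hST hi)
  simpa [hi] using this

lemma linIndep_empty (v : ι → V) : LinIndep v ∅ := by
  rw [linIndep_sum_iff]; intro g hg i hi; simp at hi

lemma exists_circuit_of_dep {v : ι → V} {S : Finset ι} (h : ¬ LinIndep v S) :
    ∃ C ⊆ S, LinCircuit v C := by
  classical
  induction S using Finset.strongInduction with
  | _ S ih =>
    by_cases hmin : ∀ D : Finset ι, D ⊂ S → LinIndep v D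
    · exact ⟨S, Finset.Subset.refl S, h, hmin⟩
    · push_neg at hmin
      obtain ⟨D, hDS, hD⟩ := hmin
      obtain ⟨C, hCD, hC⟩ := ih D hDS hD
      exact ⟨C, hCD.trans hDS.subset, hC⟩

lemma circuit_mem_span [DecidableEq ι] {v : ι → V} {C : Finset ι} (hC : LinCircuit v C)
    {u : ι} (hu : u ∈ C) :
    v u ∈ span ℂ (v '' (C.erase u)) := by
  obtain ⟨hdep, hmin⟩ := hC
  rw [linIndep_sum_iff] at hdep
  push_neg at hdep
  obtain ⟨g, hg0, i, hi, hgi⟩ := hdep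
  have herase := hmin (C.erase u) (Finset.erase_ssubset hu)
  rw [linIndep_sum_iff] at herase
  rw [← Finset.add_sum_erase C _ hu] at hg0
  have hgu : g u ≠ 0 := by
    intro hgu
    have hsum : ∑ j ∈ C.erase u, g j • v j = 0 := by
      rw [hgu] at hg0; simpa using hg0
    rcases eq_or_ne i u with rfl | hne
    · exact hgi hgu
    · exact hgi (herase g hsum i (Finset.mem_erase.2 ⟨hne, hi⟩))
  have hvu : v u = (-(g u)⁻¹) • ∑ j ∈ C.erase u, g j • v j := by
    rw [eq_comm, neg_smul, neg_eq_iff_add_eq_zero, smul_sum]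
    have : (g u)⁻¹ • (g u • v u) = v u := by
      rw [smul_smul, inv_mul_cancel₀ hgu, one_smul]
    calc ∑ j ∈ C.erase u, (g u)⁻¹ • (g j • v j) + v u
        = (g u)⁻¹ • (g u • v u + ∑ j ∈ C.erase u, g j • v j) := by
          rw [smul_add, this, smul_sum, add_comm]
      _ = 0 := by rw [hg0, smul_zero]
  rw [hvu]
  refine Submodule.smul_mem _ _ (Submodule.sum_mem _ fun j hj => ?_)
  exact Submodule.smul_mem _ _ (Submodule.subset_span (Set.mem_image_of_mem v (by simp only [Finset.coe_erase, Set.mem_diff, Set.mem_singleton_iff]; simp at hj; exact ⟨hj.2, hj.1⟩)))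

lemma linIndep_insert_of_not_mem_span [DecidableEq ι] {v : ι → V} {S : Finset ι} {e : ι}
    (hS : LinIndep v S) (he : v e ∉ span ℂ (v '' S)) :
    LinIndep v (insert e S) := by
  have heS : e ∉ S := fun h => he (Submodule.subset_span ⟨e, h, rfl⟩)
  rw [linIndep_sum_iff] at hS ⊢
  intro g hg
  rw [Finset.sum_insert heS] at hg
  have hge : g e = 0 := by
    by_contra hge
    apply he
    have : v e = (-(g e)⁻¹) • ∑ j ∈ S, g j • v j := by
      rw [eq_comm, neg_smul, neg_eq_iff_add_eq_zero]
      calc (g e)⁻¹ • ∑ j ∈ S, g j • v j + v e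
          = (g e)⁻¹ • (g e • v e + ∑ j ∈ S, g j • v j) := by
            rw [smul_add, smul_smul, inv_mul_cancel₀ hge, one_smul, add_comm]
        _ = 0 := by rw [hg, smul_zero]
    rw [this]
    exact Submodule.smul_mem _ _ (Submodule.sum_mem _ fun j hj =>
      Submodule.smul_mem _ _ (Submodule.subset_span ⟨j, hj, rfl⟩))
  have hrest : ∑ j ∈ S, g j • v j = 0 := by
    rw [hge] at hg; simpa using hg
  intro i hi
  rcases Finset.mem_insert.1 hi with rfl | hi
  · exact hge
  · exact hS g hrest i hi


noncomputable def linRk (v : ι → V) (A : Finset ι) : ℕ :=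
  finrank ℂ (span ℂ (v '' A))

lemma span_insert_eq {v : ι → V} {B : Finset ι} {e : ι} [DecidableEq ι]
    (he : v e ∈ span ℂ (v '' B)) :
    span ℂ (v '' ((insert e B : Finset ι) : Set ι)) = span ℂ (v '' B) := by
  rw [Finset.coe_insert, Set.image_insert_eq, Submodule.span_insert_eq_span he]

lemma linIndep_iff_rk [DecidableEq ι] {v : ι → V} (A : Finset ι) :
    LinIndep v A ↔ linRk v A = A.card := by
  rw [LinIndep, linearIndependent_iff_card_eq_finrank_span]
  have h1 : Set.range (fun x : A => v x) = v '' A := by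
    ext y; simp [Set.mem_image]
  rw [Set.finrank, h1]
  unfold linRk
  rw [Fintype.card_coe]
  exact eq_comm

lemma linRk_le [FiniteDimensional ℂ V] {v : ι → V} {A B : Finset ι} (h : A ⊆ B) :
    linRk v A ≤ linRk v B := by
  apply Submodule.finrank_mono
  exact Submodule.span_mono (Set.image_mono (by exact_mod_cast h))

lemma linRk_le_finrank [FiniteDimensional ℂ V] (v : ι → V) (A : Finset ι) :
    linRk v A ≤ finrank ℂ V :=
  Submodule.finrank_le _

lemma linBase_iff [FiniteDimensional ℂ V] [Fintype ι] [DecidableEq ι] {v : ι → V} (S : Finset ι) :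
    LinBase v S ↔ LinIndep v S ∧ S.card = linRk v (Finset.univ : Finset ι) := by
  constructor
  · rintro ⟨hind, hmax⟩
    refine ⟨hind, ?_⟩
    have hspan : span ℂ (v '' S) = span ℂ (v '' (Finset.univ : Finset ι)) := by
      refine le_antisymm (Submodule.span_mono (Set.image_mono (by simp))) ?_
      rw [Submodule.span_le]
      rintro x ⟨j, -, rfl⟩
      by_contra hj
      have hins := linIndep_insert_of_not_mem_span hind hj
      have := hmax _ (Finset.subset_insert j S) hins
      have hjS : j ∉ S := fun h => hj (Submodule.subset_span ⟨j, h, rfl⟩)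
      exact hjS (this ▸ Finset.mem_insert_self j S)
    have h2 := (linIndep_iff_rk S).1 hind
    rw [← h2]
    unfold linRk
    rw [hspan]
  · rintro ⟨hind, hcard⟩
    refine ⟨hind, fun T hST hT => ?_⟩
    have h1 : T.card ≤ S.card := by
      rw [← (linIndep_iff_rk T).1 hT, hcard]
      exact linRk_le (Finset.subset_univ T)
    exact (Finset.eq_of_subset_of_card_le hST h1).symm



section Whitney

variable [Fintype ι] (v : ι → V) (lo : LinearOrder ι)

open scoped Classical in
noncomputable def badSet (A : Finset ι) : Finset ι :=
  Finset.univ.filter (fun e => ∃ C : Finset ι,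
    LinCircuit v C ∧ e ∈ C ∧ (∀ w ∈ C, lo.le w e) ∧ C.erase e ⊆ A)

lemma mem_badSet {A : Finset ι} {e : ι} :
    e ∈ badSet v lo A ↔ ∃ C : Finset ι,
      LinCircuit v C ∧ e ∈ C ∧ (∀ w ∈ C, lo.le w e) ∧ C.erase e ⊆ A := by
  classical
  simp [badSet]

lemma badSet_mono {A B : Finset ι} (h : A ⊆ B) : badSet v lo A ⊆ badSet v lo B := by
  intro e he
  rw [mem_badSet] at he ⊢
  obtain ⟨C, h1, h2, h3, h4⟩ := he
  exact ⟨C, h1, h2, h3, h4.trans h⟩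

lemma circuit_nonempty {C : Finset ι} (hC : LinCircuit v C) : C.Nonempty := by
  rcases C.eq_empty_or_nonempty with rfl | h
  · exact absurd (linIndep_empty v) hC.1
  · exact h

lemma badSet_nonempty_of_not_good {A : Finset ι}
    (h : ¬ (LinIndep v A ∧ LinNoBrokenCircuit v lo A)) :
    (badSet v lo A).Nonempty := by
  letI := lo
  rw [not_and_or] at h
  rcases h with h | h
  · obtain ⟨C, hCA, hC⟩ := exists_circuit_of_dep h
    obtain ⟨e, he, hemax⟩ := Finset.exists_max_image C id (circuit_nonempty v hC)
    refine ⟨e, (mem_badSet v lo).2 ⟨C, hC, he, fun w hw => hemax w hw, ?_⟩⟩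
    exact (Finset.erase_subset _ _).trans hCA
  · rw [LinNoBrokenCircuit] at h
    push_neg at h
    obtain ⟨B, ⟨C, hC, u, hu, humax, rfl⟩, hBA⟩ := h
    exact ⟨u, (mem_badSet v lo).2 ⟨C, hC, hu, humax, hBA⟩⟩

lemma not_good_of_badSet_nonempty {A : Finset ι} (h : (badSet v lo A).Nonempty) :
    ¬ (LinIndep v A ∧ LinNoBrokenCircuit v lo A) := by
  rintro ⟨-, hnbc⟩
  obtain ⟨e, he⟩ := h
  obtain ⟨C, hC, heC, hemax, hCA⟩ := (mem_badSet v lo).1 he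
  exact hnbc (C.erase e) ⟨C, hC, e, heC, hemax, rfl⟩ hCA

open scoped Classical in
noncomputable def tog (A : Finset ι) : Finset ι :=
  if h : (badSet v lo A).Nonempty then
    letI := lo
    let e := (badSet v lo A).min' h
    if e ∈ A then A.erase e else insert e A
  else A

lemma tog_spec {A : Finset ι} (h : (badSet v lo A).Nonempty) :
    letI := lo
    (badSet v lo (tog v lo A)).Nonempty ∧
    (∀ h' : (badSet v lo (tog v lo A)).Nonempty,
      (badSet v lo (tog v lo A)).min' h' = (badSet v lo A).min' h) ∧
    linRk v (tog v lo A) = linRk v A ∧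
    ((badSet v lo A).min' h ∈ A → tog v lo A = A.erase ((badSet v lo A).min' h)) ∧
    ((badSet v lo A).min' h ∉ A → tog v lo A = insert ((badSet v lo A).min' h) A) := by
  classical
  letI := lo
  set e := (badSet v lo A).min' h with he_def
  have heA : e ∈ badSet v lo A := Finset.min'_mem _ h
  obtain ⟨C, hC, heC, hemax, hCA⟩ := (mem_badSet v lo).1 heA
  have hCe : C.erase e ⊆ A.erase e :=
    Finset.subset_erase.2 ⟨hCA, Finset.notMem_erase e C⟩
  have hspan : v e ∈ span ℂ (v '' (A.erase e)) :=
    Submodule.span_mono (Set.image_mono (by exact_mod_cast hCe)) (circuit_mem_span hC heC)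
  have htog : tog v lo A = if e ∈ A then A.erase e else insert e A := by
    rw [tog, dif_pos h]
  -- e is in the badSet of the toggled set
  have hetog : e ∈ badSet v lo (tog v lo A) := by
    rw [htog]
    split
    · exact (mem_badSet v lo).2 ⟨C, hC, heC, hemax, hCe⟩
    · exact (mem_badSet v lo).2 ⟨C, hC, heC, hemax, hCA.trans (Finset.subset_insert e A)⟩
  have hne : (badSet v lo (tog v lo A)).Nonempty := ⟨e, hetog⟩
  refine ⟨hne, ?_, ?_, ?_, ?_⟩
  · intro h'
    refine le_antisymm (Finset.min'_le _ _ hetog) (Finset.le_min' _ _ _ ?_)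
    intro f hf
    rw [htog] at hf
    by_cases heA' : e ∈ A
    · rw [if_pos heA'] at hf
      exact Finset.min'_le _ _ (badSet_mono v lo (Finset.erase_subset e A) hf)
    · rw [if_neg heA'] at hf
      obtain ⟨C', hC', hfC', hfmax, hC'f⟩ := (mem_badSet v lo).1 hf
      by_cases heC' : e ∈ C'.erase f
      · exact hfmax e (Finset.mem_of_mem_erase heC')
      · have : C'.erase f ⊆ A := by
          intro x hx
          rcases Finset.mem_insert.1 (hC'f hx) with rfl | hxA
          · exact absurd hx heC'
          · exact hxA
        exact Finset.min'_le _ _ ((mem_badSet v lo).2 ⟨C', hC', hfC', hfmax, this⟩)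
  · rw [htog]
    by_cases heA' : e ∈ A
    · rw [if_pos heA']
      have : A = insert e (A.erase e) := (Finset.insert_erase heA').symm
      unfold linRk
      conv_rhs => rw [this]
      rw [span_insert_eq hspan]
    · rw [if_neg heA']
      have hAe : A.erase e = A := Finset.erase_eq_of_notMem heA'
      unfold linRk
      rw [span_insert_eq (hAe ▸ hspan)]
  · intro hmem; rw [htog, if_pos hmem]
  · intro hmem; rw [htog, if_neg hmem]

end Whitney

section WhitneySum

variable [Fintype ι] (v : ι → V) (lo : LinearOrder ι)

set_option maxHeartbeats 2000000 in
open scoped Classical in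
lemma whitney_sum (N : ℕ) :
    ∑ A ∈ (Finset.univ : Finset ι).powerset, ((-1 : Polynomial ℤ) ^ A.card * X ^ (N - linRk v A))
      = ∑ A ∈ (Finset.univ : Finset ι).powerset.filter
          (fun A => LinIndep v A ∧ LinNoBrokenCircuit v lo A),
          (-1 : Polynomial ℤ) ^ A.card * X ^ (N - A.card) := by
  classical
  rw [← Finset.sum_filter_add_sum_filter_not ((Finset.univ : Finset ι).powerset)
    (fun A => LinIndep v A ∧ LinNoBrokenCircuit v lo A)]
  have hbad : ∑ A ∈ (Finset.univ : Finset ι).powerset.filter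
      (fun A => ¬(LinIndep v A ∧ LinNoBrokenCircuit v lo A)),
      (-1 : Polynomial ℤ) ^ A.card * X ^ (N - linRk v A) = 0 := by
    refine Finset.sum_involution (fun A _ => tog v lo A) ?_ ?_ ?_ ?_
    · intro A ha
      have hA : (badSet v lo A).Nonempty :=
        badSet_nonempty_of_not_good v lo (by simpa using (Finset.mem_filter.1 ha).2)
      obtain ⟨hne, hmin, hrk, hmem, hnmem⟩ := tog_spec v lo hA
      rw [hrk]
      set e := (badSet v lo A).min' hA with he
      have hsign : ((-1 : Polynomial ℤ)) ^ (tog v lo A).card = -(-1) ^ A.card := by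
        by_cases heA : e ∈ A
        · rw [hmem heA, Finset.card_erase_of_mem heA]
          have h1 : A.card = (A.card - 1) + 1 := (Nat.succ_pred_eq_of_pos
            (Finset.card_pos.2 ⟨e, heA⟩)).symm
          conv_rhs => rw [h1]
          rw [pow_succ]
          ring
        · rw [hnmem heA, Finset.card_insert_of_notMem heA, pow_succ]
          ring
      rw [hsign]
      ring
    · intro A ha _
      have hA : (badSet v lo A).Nonempty :=
        badSet_nonempty_of_not_good v lo (by simpa using (Finset.mem_filter.1 ha).2)
      obtain ⟨hne, hmin, hrk, hmem, hnmem⟩ := tog_spec v lo hA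
      set e := (badSet v lo A).min' hA with he
      show tog v lo A ≠ A
      by_cases heA : e ∈ A
      · rw [hmem heA]
        intro hEq
        rw [← hEq] at heA
        exact Finset.notMem_erase e _ heA
      · rw [hnmem heA]
        intro hEq
        exact heA (hEq ▸ Finset.mem_insert_self e A)
    · intro A ha
      have hA : (badSet v lo A).Nonempty :=
        badSet_nonempty_of_not_good v lo (by simpa using (Finset.mem_filter.1 ha).2)
      obtain ⟨hne, hmin, hrk, hmem, hnmem⟩ := tog_spec v lo hA
      refine Finset.mem_filter.2 ⟨Finset.mem_powerset.2 (Finset.subset_univ _), ?_⟩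
      simpa using not_good_of_badSet_nonempty v lo hne
    · intro A ha
      have hA : (badSet v lo A).Nonempty :=
        badSet_nonempty_of_not_good v lo (by simpa using (Finset.mem_filter.1 ha).2)
      obtain ⟨hne, hmin, hrk, hmem, hnmem⟩ := tog_spec v lo hA
      obtain ⟨hne2, hmin2, hrk2, hmem2, hnmem2⟩ := tog_spec v lo hne
      set e := (badSet v lo A).min' hA with he
      have hmin' : (badSet v lo (tog v lo A)).min' hne = e := hmin hne
      simp only [hmin'] at hmem2 hnmem2
      show tog v lo (tog v lo A) = A
      by_cases heA : e ∈ A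
      · have h1 : tog v lo A = A.erase e := hmem heA
        have h2 : e ∉ tog v lo A := by rw [h1]; exact Finset.notMem_erase e A
        rw [hnmem2 h2, h1, Finset.insert_erase heA]
      · have h1 : tog v lo A = insert e A := hnmem heA
        have h2 : e ∈ tog v lo A := by rw [h1]; exact Finset.mem_insert_self e A
        rw [hmem2 h2, h1, Finset.erase_insert heA]
  rw [hbad, add_zero]
  refine Finset.sum_congr rfl fun A hA => ?_
  have hind : LinIndep v A := ((Finset.mem_filter.1 hA).2).1
  rw [(linIndep_iff_rk A).1 hind]

end WhitneySum

section Graph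

variable {n : ℕ}

abbrev Edg (G : SimpleGraph (Fin n)) := {p : Fin n × Fin n // p.1 < p.2 ∧ G.Adj p.1 p.2}

variable (G : SimpleGraph (Fin n)) [DecidableRel G.Adj]



def cpSetoid (A : Finset (Edg G)) : Setoid (Fin n) where
  r a b := ∀ f : Fin n → ℂ, (∀ e ∈ A, f e.1.1 = f e.1.2) → f a = f b
  iseqv := by
    constructor
    · intro a f _; rfl
    · intro a b h f hf; exact (h f hf).symm
    · intro a b c h1 h2 f hf; exact (h1 f hf).trans (h2 f hf)

def CompQ (A : Finset (Edg G)) : Type := Quotient (cpSetoid G A)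

instance (A : Finset (Edg G)) : Finite (CompQ G A) :=
  Finite.of_surjective (Quotient.mk (cpSetoid G A)) (Quotient.exists_rep)

noncomputable def compEquiv (A : Finset (Edg G)) {R : Type*} (ψ : R → ℂ) (hψ : Function.Injective ψ) :
    {f : Fin n → R // ∀ e ∈ A, f e.1.1 = f e.1.2} ≃ (CompQ G A → R) where
  toFun f := Quotient.lift (fun a => f.1 a) (by
    intro a b hab
    have hab' : ∀ g : Fin n → ℂ, (∀ e ∈ A, g e.1.1 = g e.1.2) → g a = g b := hab
    exact hψ (hab' (fun x => ψ (f.1 x)) (fun e he => congrArg ψ (f.2 e he))))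
  invFun g := ⟨fun a => g (Quotient.mk _ a), by
    intro e he
    have h2 : ∀ g : Fin n → ℂ, (∀ e' ∈ A, g e'.1.1 = g e'.1.2) → g e.1.1 = g e.1.2 :=
      fun g hg => hg e he
    exact congrArg g (Quotient.sound h2)⟩
  left_inv f := by ext a; rfl
  right_inv g := by
    funext qa
    induction qa using Quotient.ind
    rfl

lemma card_constant_fns (A : Finset (Edg G)) (m : ℕ) :
    Nat.card {f : Fin n → Fin m // ∀ e ∈ A, f e.1.1 = f e.1.2}
      = m ^ Nat.card (CompQ G A) := by
  have hinj : Function.Injective (fun x : Fin m => ((x : ℕ) : ℂ)) :=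
    fun a b hab => Fin.val_injective (Nat.cast_injective hab)
  rw [Nat.card_congr (compEquiv G A _ hinj), Nat.card_fun, Nat.card_eq_fintype_card,
    Fintype.card_fin]

noncomputable def Wsub (A : Finset (Edg G)) : Submodule ℂ (Fin n → ℂ) where
  carrier := {f | ∀ e ∈ A, f e.1.1 = f e.1.2}
  add_mem' := by intro f g hf hg e he; simp [hf e he, hg e he]
  zero_mem' := by intro e he; rfl
  smul_mem' := by intro c f hf e he; simp [hf e he]

noncomputable def WsubEquiv (A : Finset (Edg G)) : Wsub G A ≃ₗ[ℂ] (CompQ G A → ℂ) := by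
  refine LinearEquiv.ofBijective
    { toFun := fun (f : Wsub G A) => Quotient.lift (fun a => (f : Fin n → ℂ) a)
        (fun a b hab =>
          (hab : ∀ g : Fin n → ℂ, (∀ e ∈ A, g e.1.1 = g e.1.2) → g a = g b)
            f.1 f.2)
      map_add' := by intro f g; funext qa; induction qa using Quotient.ind; rfl
      map_smul' := by intro c f; funext qa; induction qa using Quotient.ind; rfl } ⟨?_, ?_⟩
  · intro f g hfg
    ext a
    exact congrFun hfg (Quotient.mk _ a)
  · intro g
    refine ⟨⟨fun a => g (Quotient.mk _ a), fun e he => by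
      have h2 : ∀ f : Fin n → ℂ, (∀ e' ∈ A, f e'.1.1 = f e'.1.2) → f e.1.1 = f e.1.2 :=
        fun f hf => hf e he
      exact congrArg g (Quotient.sound h2)⟩, ?_⟩
    funext qa
    induction qa using Quotient.ind
    rfl

lemma finrank_Wsub (A : Finset (Edg G)) :
    Module.finrank ℂ (Wsub G A) = Nat.card (CompQ G A) := by
  classical
  letI : Fintype (CompQ G A) := Fintype.ofFinite _
  rw [(WsubEquiv G A).finrank_eq, Module.finrank_pi, Nat.card_eq_fintype_card]

lemma compQ_add_linRk (v : (Edg G) → (Fin n → ℂ))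
    (hv : ∀ p, v p = Pi.single p.1.1 1 - Pi.single p.1.2 1) (A : Finset (Edg G)) :
    Nat.card (CompQ G A) + linRk v A = n := by
  classical
  set M : Matrix A (Fin n) ℂ := fun e i => v e i with hM
  have hker : LinearMap.ker M.mulVecLin = Wsub G A := by
    ext x
    simp only [LinearMap.mem_ker, Matrix.mulVecLin_apply]
    constructor
    · intro h e he
      have := congrFun h ⟨e, he⟩
      rw [Matrix.mulVec, hM] at this
      simp only [hv] at this
      rw [sub_dotProduct, single_dotProduct, single_dotProduct,
        one_mul, one_mul, Pi.zero_apply] at this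
      exact sub_eq_zero.1 this
    · intro h
      funext e
      rw [Matrix.mulVec, hM]
      simp only [hv]
      rw [sub_dotProduct, single_dotProduct, single_dotProduct,
        one_mul, one_mul, Pi.zero_apply, sub_eq_zero]
      exact h e.1 e.2
  have hrange : Module.finrank ℂ (LinearMap.range M.mulVecLin) = linRk v A := by
    have h1 : (Module.finrank ℂ (LinearMap.range M.mulVecLin)) = M.rank := rfl
    have h2 : Set.range M = v '' (A : Set (Edg G)) := by
      ext y
      constructor
      · rintro ⟨e, rfl⟩; exact ⟨e.1, e.2, rfl⟩
      · rintro ⟨i, hi, rfl⟩; exact ⟨⟨i, hi⟩, rfl⟩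
    rw [h1, M.rank_eq_finrank_span_row]
    unfold linRk
    rw [show Set.range M.row = Set.range M from rfl, h2]
  have := LinearMap.finrank_range_add_finrank_ker M.mulVecLin
  rw [hrange, hker, finrank_Wsub, Module.finrank_pi, Fintype.card_fin] at this
  omega

lemma adj_rel (a b : Fin n) (hadj : G.Adj a b) :
    ∀ f : Fin n → ℂ, (∀ e ∈ (Finset.univ : Finset (Edg G)), f e.1.1 = f e.1.2) → f a = f b := by
  intro f hf
  rcases lt_or_gt_of_ne (G.ne_of_adj hadj) with h | h
  · exact hf ⟨(a, b), h, hadj⟩ (Finset.mem_univ _)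
  · exact (hf ⟨(b, a), h, hadj.symm⟩ (Finset.mem_univ _)).symm

lemma walk_rel (a b : Fin n) (p : G.Walk a b) :
    ∀ f : Fin n → ℂ, (∀ e ∈ (Finset.univ : Finset (Edg G)), f e.1.1 = f e.1.2) → f a = f b := by
  induction p with
  | nil => intro f _; rfl
  | cons h p ih => intro f hf; exact (adj_rel G _ _ h f hf).trans (ih f hf)

open scoped Classical in
lemma card_components :
    Nat.card G.ConnectedComponent = Nat.card (CompQ G (Finset.univ : Finset (Edg G))) := by
  classical
  refine Nat.card_congr ?_
  refine
    { toFun := SimpleGraph.ConnectedComponent.lift (fun a => Quotient.mk (cpSetoid G _) a)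
        (fun a b p _ => Quotient.sound (walk_rel G a b p))
      invFun := Quotient.lift (fun a => G.connectedComponentMk a) ?_
      left_inv := ?_
      right_inv := ?_ }
  · intro a b hab
    have hab' : ∀ f : Fin n → ℂ,
        (∀ e ∈ (Finset.univ : Finset (Edg G)), f e.1.1 = f e.1.2) → f a = f b := hab
    set f : Fin n → ℂ := fun x => if G.Reachable a x then 1 else 0 with hf_def
    have hf : ∀ e ∈ (Finset.univ : Finset (Edg G)), f e.1.1 = f e.1.2 := by
      intro e _
      have hiff : G.Reachable a e.1.1 ↔ G.Reachable a e.1.2 :=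
        ⟨fun h => h.trans e.2.2.reachable, fun h => h.trans e.2.2.symm.reachable⟩
      simp only [hf_def]
      rw [if_congr hiff rfl rfl]
    have h1 : f a = f b := hab' f hf
    have ha : f a = 1 := by rw [hf_def]; exact if_pos (SimpleGraph.Reachable.refl a)
    have hb : G.Reachable a b := by
      by_contra hr
      rw [ha, hf_def] at h1
      simp only [if_neg hr] at h1
      exact one_ne_zero h1
    exact SimpleGraph.ConnectedComponent.sound hb
  · intro c
    induction c using SimpleGraph.ConnectedComponent.ind
    rfl
  · intro qa
    induction qa using Quotient.ind
    rfl

open scoped Classical in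
lemma count_proper (m : ℕ) :
    (Nat.card {f : Fin n → Fin m // ∀ a b, G.Adj a b → f a ≠ f b} : ℤ)
      = ∑ A ∈ (Finset.univ : Finset (Edg G)).powerset,
          (-1 : ℤ) ^ A.card * (m : ℤ) ^ (Nat.card (CompQ G A)) := by
  classical
  symm
  have hcount : ∀ A : Finset (Edg G),
      ((Finset.univ.filter (fun f : Fin n → Fin m => ∀ e ∈ A, f e.1.1 = f e.1.2)).card : ℤ)
        = (m : ℤ) ^ Nat.card (CompQ G A) := by
    intro A
    have h1 := card_constant_fns G A m
    rw [Nat.card_eq_fintype_card, Fintype.card_subtype] at h1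
    rw [h1]
    push_cast
    ring
  set mono : (Fin n → Fin m) → Finset (Edg G) :=
    fun f => Finset.univ.filter (fun e => f e.1.1 = f e.1.2) with hmono
  calc ∑ A ∈ (Finset.univ : Finset (Edg G)).powerset,
        (-1 : ℤ) ^ A.card * (m : ℤ) ^ (Nat.card (CompQ G A))
      = ∑ A ∈ (Finset.univ : Finset (Edg G)).powerset,
        ∑ f ∈ Finset.univ.filter (fun f : Fin n → Fin m => ∀ e ∈ A, f e.1.1 = f e.1.2),
          (-1 : ℤ) ^ A.card := by
        refine Finset.sum_congr rfl fun A _ => ?_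
        rw [Finset.sum_const, ← hcount A]
        push_cast
        ring
    _ = ∑ A ∈ (Finset.univ : Finset (Edg G)).powerset,
        ∑ f ∈ (Finset.univ : Finset (Fin n → Fin m)),
          if A ⊆ mono f then (-1 : ℤ) ^ A.card else 0 := by
        refine Finset.sum_congr rfl fun A _ => ?_
        rw [Finset.sum_filter]
        refine Finset.sum_congr rfl fun f _ => ?_
        have : (∀ e ∈ A, f e.1.1 = f e.1.2) ↔ A ⊆ mono f := by
          constructor
          · intro h e he; exact Finset.mem_filter.2 ⟨Finset.mem_univ _, h e he⟩
          · intro h e he; exact (Finset.mem_filter.1 (h he)).2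
        rw [if_congr this rfl rfl]
    _ = ∑ f ∈ (Finset.univ : Finset (Fin n → Fin m)),
        ∑ A ∈ (Finset.univ : Finset (Edg G)).powerset,
          if A ⊆ mono f then (-1 : ℤ) ^ A.card else 0 := Finset.sum_comm
    _ = ∑ f ∈ (Finset.univ : Finset (Fin n → Fin m)),
          if mono f = ∅ then 1 else 0 := by
        refine Finset.sum_congr rfl fun f _ => ?_
        rw [← Finset.sum_filter]
        have hps : (Finset.univ : Finset (Edg G)).powerset.filter (fun A => A ⊆ mono f)
            = (mono f).powerset := by
          ext A
          simp [Finset.mem_powerset, Finset.subset_univ]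
        rw [hps]
        exact Finset.sum_powerset_neg_one_pow_card
    _ = ((Finset.univ.filter (fun f : Fin n → Fin m => mono f = ∅)).card : ℤ) := by
        rw [Finset.sum_boole]
    _ = (Nat.card {f : Fin n → Fin m // ∀ a b, G.Adj a b → f a ≠ f b} : ℤ) := by
        rw [Nat.card_eq_fintype_card, Fintype.card_subtype]
        have hfil : Finset.univ.filter (fun f : Fin n → Fin m => mono f = ∅)
            = Finset.univ.filter (fun f : Fin n → Fin m => ∀ a b, G.Adj a b → f a ≠ f b) := by
          refine Finset.filter_congr fun f _ => ?_
          constructor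
          · intro h a b hadj
            rcases lt_or_gt_of_ne (G.ne_of_adj hadj) with hlt | hlt
            · intro heq
              have : (⟨(a, b), hlt, hadj⟩ : Edg G) ∈ mono f :=
                Finset.mem_filter.2 ⟨Finset.mem_univ _, heq⟩
              rw [h] at this
              exact absurd this (Finset.notMem_empty _)
            · intro heq
              have : (⟨(b, a), hlt, hadj.symm⟩ : Edg G) ∈ mono f :=
                Finset.mem_filter.2 ⟨Finset.mem_univ _, heq.symm⟩
              rw [h] at this
              exact absurd this (Finset.notMem_empty _)
          · intro h
            rw [Finset.eq_empty_iff_forall_notMem]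
            intro e he
            exact h e.1.1 e.1.2 e.2.2 (Finset.mem_filter.1 he).2
        rw [hfil]
end Graph

end Aux

open scoped Classical in
/-- For a graph `G` on `[n]` with `k(G)` components and `r(G) = n − k(G)`, the
evaluation `(−1)^{r(G)} χ̃_G(0)`, where `χ̃_G(t) = χ_G(t)/t^{k(G)}` and `χ_G` is the
chromatic polynomial, equals the number of maximal spanning forests of `G`
(the bases of the cycle matroid of `G`) containing no broken circuit (with respect to
a fixed linear order on the edges). -/
theorem nbc_spanning_forests_eq_chromatic (n : ℕ) (G : SimpleGraph (Fin n))
    [DecidableRel G.Adj]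
    (v : {p : Fin n × Fin n // p.1 < p.2 ∧ G.Adj p.1 p.2} → (Fin n → ℂ))
    (hv : ∀ p, v p = Pi.single p.1.1 1 - Pi.single p.1.2 1)
    (lo : LinearOrder {p : Fin n × Fin n // p.1 < p.2 ∧ G.Adj p.1 p.2})
    (p q : Polynomial ℤ)
    (hp : ∀ m : ℕ, p.eval (m : ℤ) =
      Nat.card {f : Fin n → Fin m // ∀ a b, G.Adj a b → f a ≠ f b})
    (hq : p = X ^ (Nat.card G.ConnectedComponent) * q) :
    (-1 : ℤ) ^ (n - Nat.card G.ConnectedComponent) * q.eval 0 =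
      ((univ.filter fun S : Finset {p : Fin n × Fin n // p.1 < p.2 ∧ G.Adj p.1 p.2} =>
        LinBase v S ∧ LinNoBrokenCircuit v lo S).card : ℤ) := by
  classical
  set k := Nat.card G.ConnectedComponent with hk_def
  have hk : k = Nat.card (CompQ G (Finset.univ : Finset (Edg G))) := card_components G
  have hrn : ∀ A : Finset (Edg G), Nat.card (CompQ G A) + linRk v A = n :=
    compQ_add_linRk G v hv
  have hkn : k + linRk v (Finset.univ : Finset (Edg G)) = n := by
    rw [hk]; exact hrn _
  -- the polynomial P
  set P : Polynomial ℤ := ∑ A ∈ (Finset.univ : Finset (Edg G)).powerset,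
    (-1 : Polynomial ℤ) ^ A.card * X ^ (n - linRk v A) with hP_def
  have hPeval : ∀ m : ℕ, P.eval (m : ℤ) = p.eval (m : ℤ) := by
    intro m
    rw [hp m, hP_def, Polynomial.eval_finset_sum]
    rw [count_proper G m]
    refine Finset.sum_congr rfl fun A _ => ?_
    have h1 : n - linRk v A = Nat.card (CompQ G A) := by
      have := hrn A; omega
    rw [h1]
    simp
  have hpP : p = P := by
    have h0 : p - P = 0 := by
      apply Polynomial.eq_zero_of_infinite_isRoot
      refine Set.infinite_of_injective_forall_mem (f := fun m : ℕ => (m : ℤ))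
        (fun a b hab => Nat.cast_injective hab) ?_
      intro m
      simp only [Set.mem_setOf_eq, Polynomial.IsRoot, Polynomial.eval_sub]
      rw [hPeval m]
      ring
    have := sub_eq_zero.1 h0
    exact this
  have hwhit := whitney_sum v lo n
  rw [hP_def] at hpP
  rw [hwhit] at hpP
  -- q.eval 0 = p.coeff k
  have hq0 : q.eval 0 = p.coeff k := by
    rw [hq, ← Polynomial.coeff_zero_eq_eval_zero]
    have := Polynomial.coeff_X_pow_mul q k 0
    rw [zero_add] at this
    rw [this]
  -- coefficient computation
  have hcoeff : p.coeff k = ∑ A ∈ (Finset.univ : Finset (Edg G)).powerset.filter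
      (fun A => LinIndep v A ∧ LinNoBrokenCircuit v lo A),
      (-1 : ℤ) ^ A.card * (if k = n - A.card then 1 else 0) := by
    rw [hpP, Polynomial.finset_sum_coeff]
    refine Finset.sum_congr rfl fun A _ => ?_
    have h1 : ((-1 : Polynomial ℤ) ^ A.card * X ^ (n - A.card)).coeff k
        = (-1 : ℤ) ^ A.card * (X ^ (n - A.card) : Polynomial ℤ).coeff k := by
      rw [show ((-1 : Polynomial ℤ)) = Polynomial.C (-1 : ℤ) by simp, ← Polynomial.C_pow,
        Polynomial.coeff_C_mul]
    rw [h1, Polynomial.coeff_X_pow]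
  -- identify the index set
  have hset : ((Finset.univ : Finset (Edg G)).powerset.filter
        (fun A => LinIndep v A ∧ LinNoBrokenCircuit v lo A)).filter
        (fun A => k = n - A.card)
      = (Finset.univ : Finset (Finset (Edg G))).filter
        (fun S => LinBase v S ∧ LinNoBrokenCircuit v lo S) := by
    ext A
    simp only [Finset.mem_filter, Finset.mem_powerset, Finset.mem_univ, true_and,
      Finset.subset_univ]
    constructor
    · rintro ⟨⟨hind, hnbc⟩, hcard⟩
      have h2 : A.card = linRk v A := ((linIndep_iff_rk A).1 hind).symm
      have h3 : linRk v A ≤ linRk v (Finset.univ : Finset (Edg G)) :=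
        linRk_le (Finset.subset_univ A)
      have h4 : A.card = n - k := by omega
      refine ⟨(linBase_iff A).2 ⟨hind, ?_⟩, hnbc⟩
      omega
    · rintro ⟨hbase, hnbc⟩
      obtain ⟨hind, hcard⟩ := (linBase_iff A).1 hbase
      exact ⟨⟨hind, hnbc⟩, by omega⟩
  -- finish
  have hsum : p.coeff k = (-1 : ℤ) ^ (n - k) *
      (((Finset.univ : Finset (Finset (Edg G))).filter
        (fun S => LinBase v S ∧ LinNoBrokenCircuit v lo S)).card : ℤ) := by
    rw [hcoeff]
    have h5 : ∀ A ∈ (Finset.univ : Finset (Edg G)).powerset.filter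
        (fun A => LinIndep v A ∧ LinNoBrokenCircuit v lo A),
        (-1 : ℤ) ^ A.card * (if k = n - A.card then 1 else 0)
          = if k = n - A.card then (-1 : ℤ) ^ A.card else 0 := by
      intro A _
      split <;> ring
    rw [Finset.sum_congr rfl h5, ← Finset.sum_filter, hset]
    -- every member has card n - k
    have h6 : ∀ A ∈ (Finset.univ : Finset (Finset (Edg G))).filter
        (fun S => LinBase v S ∧ LinNoBrokenCircuit v lo S),
        (-1 : ℤ) ^ A.card = (-1 : ℤ) ^ (n - k) := by
      intro A hA
      obtain ⟨hind, hcard⟩ := (linBase_iff A).1 (Finset.mem_filter.1 hA).2.1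
      rw [hcard]
      congr 1
      omega
    rw [Finset.sum_congr rfl h6, Finset.sum_const, nsmul_eq_mul]
    ring
  rw [hq0, hsum, ← mul_assoc, ← pow_add]
  have heven : Even ((n - k) + (n - k)) := ⟨n - k, rfl⟩
  rw [heven.neg_one_pow, one_mul]
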